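/- In the dicot universe under misère play, * + * ≡ 0; that is, for every dicot game X, the misère outcome of * + * + X equals the misère outcome of X. -/

import Mathlib

universe u

namespace SetTheory

/-- Pre-games, as in Mathlib (December 2024), since removed from Mathlib. -/
inductive PGame : Type (u + 1)
  | mk : ∀ α β : Type u, (α → PGame) → (β → PGame) → PGame

namespace PGame

def LeftMoves : PGame → Type u
  | mk l _ _ _ => l

def RightMoves : PGame → Type u
  | mk _ r _ _ => r

def moveLeft : ∀ g : PGame, LeftMoves g → PGame
  | mk _l _ L _ => L

def moveRight : ∀ g : PGame, RightMoves g → PGame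
  | mk _ _r _ R => R

inductive IsOption : PGame → PGame → Prop
  | moveLeft {x : PGame} (i : x.LeftMoves) : IsOption (x.moveLeft i) x
  | moveRight {x : PGame} (i : x.RightMoves) : IsOption (x.moveRight i) x

def Subsequent : PGame → PGame → Prop :=
  Relation.TransGen IsOption

instance : Zero PGame :=
  ⟨⟨PEmpty, PEmpty, PEmpty.elim, PEmpty.elim⟩⟩

def neg : PGame → PGame
  | ⟨l, r, L, R⟩ => ⟨r, l, fun i => neg (R i), fun i => neg (L i)⟩

instance : Neg PGame :=
  ⟨neg⟩

noncomputable instance : Add PGame.{u} :=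
  ⟨fun x y => by
    induction x generalizing y with | mk xl xr _ _ IHxl IHxr => _
    induction y with | mk yl yr yL yR IHyl IHyr => _
    have y := mk yl yr yL yR
    refine ⟨xl ⊕ yl, xr ⊕ yr, Sum.rec ?_ ?_, Sum.rec ?_ ?_⟩
    · exact fun i => IHxl i y
    · exact IHyl
    · exact fun i => IHxr i y
    · exact IHyr⟩

def star : PGame.{u} :=
  ⟨PUnit, PUnit, fun _ => 0, fun _ => 0⟩

inductive Relabelling : PGame.{u} → PGame.{u} → Prop
  | mk : ∀ {x y : PGame.{u}} (L : x.LeftMoves ≃ y.LeftMoves) (R : x.RightMoves ≃ y.RightMoves),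
      (∀ i, Relabelling (x.moveLeft i) (y.moveLeft (L i))) →
        (∀ j, Relabelling (x.moveRight j) (y.moveRight (R j))) → Relabelling x y

theorem Relabelling.refl (x : PGame.{u}) : x.Relabelling x := by
  induction x with
  | mk xl xr xL xR IHl IHr => exact ⟨Equiv.refl _, Equiv.refl _, fun i => IHl i, fun j => IHr j⟩

theorem zeroAddRelabelling (x : PGame.{u}) : (0 + x).Relabelling x := by
  induction x with
  | mk xl xr xL xR IHl IHr =>
    refine ⟨Equiv.emptySum PEmpty xl, Equiv.emptySum PEmpty xr, ?_, ?_⟩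
    · rintro (⟨⟨⟩⟩ | i)
      exact IHl i
    · rintro (⟨⟨⟩⟩ | i)
      exact IHr i

theorem addZeroRelabelling (x : PGame.{u}) : (x + 0).Relabelling x := by
  induction x with
  | mk xl xr xL xR IHl IHr =>
    refine ⟨Equiv.sumEmpty xl PEmpty, Equiv.sumEmpty xr PEmpty, ?_, ?_⟩
    · rintro (i | ⟨⟨⟩⟩)
      exact IHl i
    · rintro (i | ⟨⟨⟩⟩)
      exact IHr i

theorem Relabelling.addCongr {w x y z : PGame.{u}} (h1 : w.Relabelling x) (h2 : y.Relabelling z) :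
    (w + y).Relabelling (x + z) := by
  induction w generalizing x y z with
  | mk wl wr wL wR IHwl IHwr =>
  induction y generalizing z with
  | mk yl yr yL yR IHyl IHyr =>
  cases x
  cases z
  have h1' := h1
  have h2' := h2
  obtain ⟨L₁, R₁, hL₁, hR₁⟩ := h1'
  obtain ⟨L₂, R₂, hL₂, hR₂⟩ := h2'
  refine ⟨Equiv.sumCongr L₁ L₂, Equiv.sumCongr R₁ R₂, ?_, ?_⟩
  · rintro (i | j)
    · exact IHwl i (hL₁ i) h2
    · exact IHyl j (hL₂ j)
  · rintro (i | j)
    · exact IHwr i (hR₁ i) h2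
    · exact IHyr j (hR₂ j)

end PGame

end SetTheory

open SetTheory

namespace Sprigs

/-- Partizan games (in the lowest universe). -/
abbrev PG : Type 1 := PGame.{0}

/-- Winning predicates moving first under misère play:
`(mw G).1` = Left wins moving first; `(mw G).2` = Right wins moving first. -/
def mw : PG → Prop × Prop
  | PGame.mk α β L R =>
    ((IsEmpty α ∨ ∃ i, ¬ (mw (L i)).2), (IsEmpty β ∨ ∃ j, ¬ (mw (R j)).1))

/-- Winning predicates moving first under normal play. -/
def nw : PG → Prop × Prop
  | PGame.mk _ _ L R => ((∃ i, ¬ (nw (L i)).2), (∃ j, ¬ (nw (R j)).1))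

/-- Outcome classes. -/
inductive Outcome : Type
  | L | R | N | P
deriving DecidableEq

/-- The outcome determined by "Left wins moving first" and "Right wins moving first". -/
noncomputable def outcomeOf (wl wr : Prop) : Outcome :=
  haveI := Classical.propDecidable wl
  haveI := Classical.propDecidable wr
  if wl then (if wr then .N else .L) else (if wr then .R else .P)

/-- Misère-play outcome. -/
noncomputable def mo (G : PG) : Outcome := outcomeOf (mw G).1 (mw G).2

/-- Normal-play outcome. -/
noncomputable def no (G : PG) : Outcome := outcomeOf (nw G).1 (nw G).2

/-- Partial order on outcomes: R < P < L and R < N < L, with P, N incomparable. -/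
def Outcome.le : Outcome → Outcome → Prop
  | .R, _ => True
  | _, .L => True
  | a, b => a = b

def Outcome.lt (a b : Outcome) : Prop := Outcome.le a b ∧ a ≠ b

/-- Dicot games: every subposition has moves for both players or neither. -/
def Dicot : PG → Prop
  | PGame.mk α β L R =>
    ((IsEmpty α ∧ IsEmpty β) ∨ (Nonempty α ∧ Nonempty β)) ∧
      (∀ i, Dicot (L i)) ∧ (∀ j, Dicot (R j))

/-- Ordinal sum `G : H`. -/
def ordSum (G : PG) : PG → PGame
  | PGame.mk α β L R =>
    PGame.mk (G.LeftMoves ⊕ α) (G.RightMoves ⊕ β)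
      (Sum.elim G.moveLeft (fun a => ordSum G (L a)))
      (Sum.elim G.moveRight (fun b => ordSum G (R b)))

/-- Canonical form of a natural number as a game. -/
def natGame : ℕ → PGame
  | 0 => PGame.mk PEmpty PEmpty PEmpty.elim PEmpty.elim
  | n + 1 => PGame.mk PUnit PEmpty (fun _ => natGame n) PEmpty.elim

/-- Canonical form of an integer as a game. -/
def intGame (m : ℤ) : PG := if 0 ≤ m then natGame m.toNat else -natGame (-m).toNat

/-- Canonical form of the dyadic rational `m / 2 ^ n` as a game. -/
def dGame : ℕ → ℤ → PGame
  | 0, m => intGame m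
  | n + 1, m =>
    if m % 2 = 0 then dGame n (m / 2)
    else PGame.mk PUnit PUnit (fun _ => dGame n ((m - 1) / 2)) (fun _ => dGame n ((m + 1) / 2))

/-- A rational number is dyadic if its denominator is a power of two. -/
def IsDyadic (q : ℚ) : Prop := ∃ n : ℕ, q.den = 2 ^ n

/-- The canonical-form game of a dyadic rational. -/
def qGame (q : ℚ) : PG := dGame (Nat.log 2 q.den) q.num

/-- The Sprig `* : x` for a dyadic rational `x`. -/
def sprig (q : ℚ) : PG := ordSum PGame.star (qGame q)

/-- The Sprig `* : x̄` where `x̄` is the conjugate of the dyadic rational `x`. -/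
def sprigNeg (q : ℚ) : PG := ordSum PGame.star (-qGame q)

/-- Disjunctive sum of a list of games. -/
noncomputable def listSum (l : List PG) : PG := l.foldr (· + ·) 0

/-- The position `(X, Y) = Σ_{x ∈ X} *:x + Σ_{y ∈ Y} *:(-y)`. -/
noncomputable def sprigsGame (X Y : List ℚ) : PG := listSum (X.map sprig ++ Y.map sprigNeg)

/-- The minimum of a nonempty multiset of rationals (0 for the empty multiset). -/
noncomputable def mmin (s : Multiset ℚ) : ℚ :=
  if h : s = 0 then 0 else
    s.toFinset.min' (by rwa [Multiset.toFinset_nonempty])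

/-- The edge `ε` computed from the reduced multisets `X' = X \ Y` and `Y' = Y \ X`. -/
noncomputable def edge (X Y : Multiset ℚ) : ℚ :=
  if X - Y = 0 ∨ Y - X = 0 then 0 else mmin (X - Y) - mmin (Y - X)

/-- The universe `S` of finite sums of Sprigs (and `*`). -/
inductive InS : PG → Prop
  | star : InS PGame.star
  | sprig {q : ℚ} (h : IsDyadic q) : InS (sprig q)
  | sprigNeg {q : ℚ} (h : IsDyadic q) : InS (sprigNeg q)
  | add {a b : PG} : InS a → InS b → InS (a + b)

/-- A universe: a set of games closed under disjunctive sum and followers. -/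
def IsUniverse (S : Set PG) : Prop :=
  (∀ a ∈ S, ∀ b ∈ S, a + b ∈ S) ∧ ∀ a ∈ S, ∀ b, PGame.Subsequent b a → b ∈ S

lemma mw_rel : ∀ {x y : PGame.{0}}, x.Relabelling y → mw x = mw y
  | PGame.mk a b L R, PGame.mk a' b' L' R', ⟨eL, eR, hL, hR⟩ => by
    have h1 : ∀ i, mw (L i) = mw (L' (eL i)) := fun i => mw_rel (hL i)
    have h2 : ∀ j, mw (R j) = mw (R' (eR j)) := fun j => mw_rel (hR j)
    show ((IsEmpty a ∨ ∃ i, ¬ (mw (L i)).2), (IsEmpty b ∨ ∃ j, ¬ (mw (R j)).1)) =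
      ((IsEmpty a' ∨ ∃ i, ¬ (mw (L' i)).2), (IsEmpty b' ∨ ∃ j, ¬ (mw (R' j)).1))
    have e1 : IsEmpty a ↔ IsEmpty a' := Equiv.isEmpty_congr (eL : a ≃ a')
    have e2 : IsEmpty b ↔ IsEmpty b' := Equiv.isEmpty_congr (eR : b ≃ b')
    refine Prod.ext ?_ ?_ <;> simp only []
    · refine propext (or_congr e1 ⟨fun ⟨i, hi⟩ => ⟨eL i, by rwa [← h1]⟩,
        fun ⟨i', hi⟩ => ⟨eL.symm i', by rw [h1 (eL.symm i')]; exact (congrArg (fun g => ¬ (mw g).2) (congrArg L' (eL.apply_symm_apply i'))).mpr hi⟩⟩)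
    · refine propext (or_congr e2 ⟨fun ⟨j, hj⟩ => ⟨eR j, by rwa [← h2]⟩,
        fun ⟨j', hj⟩ => ⟨eR.symm j', by rw [h2 (eR.symm j')]; exact (congrArg (fun g => ¬ (mw g).1) (congrArg R' (eR.apply_symm_apply j'))).mpr hj⟩⟩)

lemma mw_zero_add (x : PGame.{0}) : mw (0 + x) = mw x := mw_rel (PGame.zeroAddRelabelling x)

/-- If Right loses moving first in `* + X`, Left wins moving first in `X`. -/
lemma B2 : ∀ (X : PGame.{0}), ¬ (mw (PGame.star + X)).2 → (mw X).1
  | PGame.mk α β L R, h => by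
    have h' : ¬ ((IsEmpty (PUnit ⊕ β) : Prop) ∨
        ∃ j : PUnit ⊕ β, ¬ (mw ((Sum.elim (fun _ : PUnit => (0 : PGame) + PGame.mk α β L R)
          (fun d => PGame.mk PUnit PUnit (fun _ => 0) (fun _ => 0) + R d)) j)).1) := h
    push_neg at h'
    have := h'.2 (Sum.inl PUnit.unit)
    simpa [mw_zero_add] using this

lemma B1 : ∀ (X : PGame.{0}), ¬ (mw (PGame.star + X)).1 → (mw X).2
  | PGame.mk α β L R, h => by
    have h' : ¬ ((IsEmpty (PUnit ⊕ α) : Prop) ∨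
        ∃ i : PUnit ⊕ α, ¬ (mw ((Sum.elim (fun _ : PUnit => (0 : PGame) + PGame.mk α β L R)
          (fun c => PGame.mk PUnit PUnit (fun _ => 0) (fun _ => 0) + L c)) i)).2) := h
    push_neg at h'
    have := h'.2 (Sum.inl PUnit.unit)
    simpa [mw_zero_add] using this

/-- Relabellings for star moves inside `* + * + X`. -/
lemma mw_zs {X : PGame.{0}} : mw ((0 + PGame.star) + X) = mw (PGame.star + X) :=
  mw_rel ((PGame.zeroAddRelabelling PGame.star).addCongr (PGame.Relabelling.refl X))
lemma mw_sz {X : PGame.{0}} : mw ((PGame.star + 0) + X) = mw (PGame.star + X) :=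
  mw_rel ((PGame.addZeroRelabelling PGame.star).addCongr (PGame.Relabelling.refl X))

/-- If `X` has no moves, Right moving first in `* + X` loses. -/
lemma starX2 {α β : Type} {L : α → PGame.{0}} {R : β → PGame.{0}}
    (ha : IsEmpty α) (hb : IsEmpty β) : ¬ (mw (PGame.star + PGame.mk α β L R)).2 := by
  show ¬ ((IsEmpty (PUnit ⊕ β) : Prop) ∨
      ∃ j : PUnit ⊕ β, ¬ (mw ((Sum.elim (fun _ : PUnit => (0 : PGame) + PGame.mk α β L R)
        (fun d => PGame.star + R d)) j)).1)
  rintro (he | ⟨(u | b), hj⟩)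
  · exact he.elim (Sum.inl PUnit.unit)
  · refine hj ?_
    show (mw ((0:PGame) + PGame.mk α β L R)).1
    rw [mw_zero_add]
    exact (Or.inl ha : (IsEmpty α ∨ ∃ i, ¬ (mw (L i)).2))
  · exact hb.elim b

lemma starX1 {α β : Type} {L : α → PGame.{0}} {R : β → PGame.{0}}
    (ha : IsEmpty α) (hb : IsEmpty β) : ¬ (mw (PGame.star + PGame.mk α β L R)).1 := by
  show ¬ ((IsEmpty (PUnit ⊕ α) : Prop) ∨
      ∃ i : PUnit ⊕ α, ¬ (mw ((Sum.elim (fun _ : PUnit => (0 : PGame) + PGame.mk α β L R)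
        (fun c => PGame.star + L c)) i)).2)
  rintro (he | ⟨(u | a), hi⟩)
  · exact he.elim (Sum.inl PUnit.unit)
  · refine hi ?_
    show (mw ((0:PGame) + PGame.mk α β L R)).2
    rw [mw_zero_add]
    exact (Or.inl hb : (IsEmpty β ∨ ∃ j, ¬ (mw (R j)).1))
  · exact ha.elim a

lemma key : ∀ (X : PGame.{0}), Dicot X →
    (((mw (PGame.star + PGame.star + X)).1 ↔ (mw X).1) ∧
     ((mw (PGame.star + PGame.star + X)).2 ↔ (mw X).2))
  | PGame.mk α β L R, ⟨hne, hdL, hdR⟩ => by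
    have IHL := fun a => key (L a) (hdL a)
    have IHR := fun b => key (R b) (hdR b)
    set X := PGame.mk α β L R with hX
    have e1 : (mw (PGame.star + PGame.star + X)).1 =
        ((IsEmpty ((PUnit ⊕ PUnit) ⊕ α) : Prop) ∨
          ∃ i : (PUnit ⊕ PUnit) ⊕ α, ¬ (mw ((Sum.elim
            (fun s => Sum.elim (fun _ : PUnit => (0 : PGame) + PGame.star)
              (fun _ : PUnit => PGame.star + 0) s + X)
            (fun a => PGame.star + PGame.star + L a)) i)).2) := rfl
    have e2 : (mw (PGame.star + PGame.star + X)).2 =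
        ((IsEmpty ((PUnit ⊕ PUnit) ⊕ β) : Prop) ∨
          ∃ j : (PUnit ⊕ PUnit) ⊕ β, ¬ (mw ((Sum.elim
            (fun s => Sum.elim (fun _ : PUnit => (0 : PGame) + PGame.star)
              (fun _ : PUnit => PGame.star + 0) s + X)
            (fun b => PGame.star + PGame.star + R b)) j)).1) := rfl
    constructor
    · rw [e1]
      constructor
      · rintro (he | ⟨(s | a), hi⟩)
        · exact (he.false (Sum.inl (Sum.inl PUnit.unit))).elim
        · -- star move
          rcases s with u | u
          · have hi' : ¬ (mw (((0:PGame) + PGame.star) + X)).2 := hi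
            rw [mw_zs] at hi'
            exact B2 X hi'
          · have hi' : ¬ (mw ((PGame.star + (0:PGame)) + X)).2 := hi
            rw [mw_sz] at hi'
            exact B2 X hi'
        · exact Or.inr ⟨a, fun h => hi ((IHL a).2.mpr h)⟩
      · rintro (ha | ⟨a, hA⟩)
        · rcases hne with ⟨_, hb⟩ | ⟨⟨a⟩, _⟩
          · refine Or.inr ⟨Sum.inl (Sum.inl PUnit.unit), ?_⟩
            show ¬ (mw (((0:PGame) + PGame.star) + X)).2
            rw [mw_zs]
            exact starX2 ha hb
          · exact (ha.false a).elim
        · exact Or.inr ⟨Sum.inr a, fun h => hA ((IHL a).2.mp h)⟩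
    · rw [e2]
      constructor
      · rintro (he | ⟨(s | b), hj⟩)
        · exact (he.false (Sum.inl (Sum.inl PUnit.unit))).elim
        · rcases s with u | u
          · have hj' : ¬ (mw (((0:PGame) + PGame.star) + X)).1 := hj
            rw [mw_zs] at hj'
            exact B1 X hj'
          · have hj' : ¬ (mw ((PGame.star + (0:PGame)) + X)).1 := hj
            rw [mw_sz] at hj'
            exact B1 X hj'
        · exact Or.inr ⟨b, fun h => hj ((IHR b).1.mpr h)⟩
      · rintro (hb | ⟨b, hB⟩)
        · rcases hne with ⟨ha, _⟩ | ⟨_, ⟨b⟩⟩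
          · refine Or.inr ⟨Sum.inl (Sum.inl PUnit.unit), ?_⟩
            show ¬ (mw (((0:PGame) + PGame.star) + X)).1
            rw [mw_zs]
            exact starX1 ha hb
          · exact (hb.false b).elim
        · exact Or.inr ⟨Sum.inr b, fun h => hB ((IHR b).1.mp h)⟩


/-- `* + * ≡ 0` modulo the dicot universe under misère play. -/
theorem stmt3 : ∀ X : PG, Dicot X → mo (PGame.star + PGame.star + X) = mo X := by
  intro X hX
  have k := key X hX
  unfold mo
  rw [propext k.1, propext k.2]

end Sprigs
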